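/- arXiv:2202.13122 — 4 statements merged into one kernel-verified Lean document; each statement's English description precedes it below -/
import Mathlib

section
/- Let P be a symmetric positive semidefinite block matrix P = [[Z, B], [Bᵀ, X]] with Z ∈ ℝ^{p×p} symmetric, B ∈ ℝ^{p×n}, X ∈ ℝ^{n×n} symmetric. Then the minimum over all z ∈ ℝ^p and x ∈ ℝ^n \ {0} of (1/‖x‖²) · [z; x]ᵀ P [z; x] equals λ_min(X − Bᵀ Z⁻ B), where Z⁻ is a generalized inverse of Z (e.g., the Moore–Penrose pseudoinverse). The minimum is attained at z = −Z⁻ B v, x = v, where v is an eigenvector of X − Bᵀ Z⁻ B for its minimum eigenvalue. -/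
open Matrix

section MPAux

lemma mp_unique {p : ℕ} (Z W1 W2 : Matrix (Fin p) (Fin p) ℝ)
    (h1 : Z * W1 * Z = Z ∧ W1 * Z * W1 = W1 ∧ (Z * W1)ᵀ = Z * W1 ∧ (W1 * Z)ᵀ = W1 * Z)
    (h2 : Z * W2 * Z = Z ∧ W2 * Z * W2 = W2 ∧ (Z * W2)ᵀ = Z * W2 ∧ (W2 * Z)ᵀ = W2 * Z) :
    W1 = W2 := by
  obtain ⟨a1, b1, c1, d1⟩ := h1
  obtain ⟨a2, b2, c2, d2⟩ := h2
  have e1 : Z * W1 = Z * W2 := by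
    calc Z * W1 = (Z * W2) * (Z * W1) := by rw [← mul_assoc, a2]
    _ = (Z * W2)ᵀ * (Z * W1)ᵀ := by rw [c2, c1]
    _ = W2ᵀ * (Z * W1 * Z)ᵀ := by
        simp only [transpose_mul, transpose_transpose]
        noncomm_ring
    _ = W2ᵀ * Zᵀ := by rw [a1]
    _ = (Z * W2)ᵀ := by rw [transpose_mul]
    _ = Z * W2 := c2
  have e2 : W1 * Z = W2 * Z := by
    calc W1 * Z = W1 * (Z * W2 * Z) := by rw [a2]
    _ = (W1 * Z) * (W2 * Z) := by noncomm_ring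
    _ = (W1 * Z)ᵀ * (W2 * Z)ᵀ := by rw [d1, d2]
    _ = (Z * W1 * Z)ᵀ * W2ᵀ := by
        simp only [transpose_mul, transpose_transpose]
        noncomm_ring
    _ = Zᵀ * W2ᵀ := by rw [a1]
    _ = (W2 * Z)ᵀ := by rw [transpose_mul]
    _ = W2 * Z := d2
  calc W1 = W1 * Z * W1 := b1.symm
  _ = W1 * (Z * W2) := by rw [mul_assoc, e1]
  _ = (W2 * Z) * W2 := by rw [← e2, mul_assoc]
  _ = W2 := b2

private lemma UDU_mul {p : ℕ} (U : Matrix (Fin p) (Fin p) ℝ) (hUU : star U * U = 1)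
    (a b : Fin p → ℝ) :
    (U * diagonal a * star U) * (U * diagonal b * star U)
      = U * diagonal (fun i => a i * b i) * star U := by
  have h : (U * diagonal a * star U) * (U * diagonal b * star U)
      = U * (diagonal a * ((star U * U) * (diagonal b * star U))) := by noncomm_ring
  rw [h, hUU, Matrix.one_mul, ← Matrix.mul_assoc (diagonal a), diagonal_mul_diagonal]
  noncomm_ring

private lemma UDU_transpose {p : ℕ} (U : Matrix (Fin p) (Fin p) ℝ) (a : Fin p → ℝ) :
    (U * diagonal a * star U)ᵀ = U * diagonal a * star U := by
  rw [Matrix.star_eq_conjTranspose, conjTranspose_eq_transpose_of_trivial]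
  simp [transpose_mul, diagonal_transpose, Matrix.mul_assoc]

lemma mp_exists {p : ℕ} (Z : Matrix (Fin p) (Fin p) ℝ) (hZ : Z.IsHermitian) :
    ∃ W : Matrix (Fin p) (Fin p) ℝ,
      Z * W * Z = Z ∧ W * Z * W = W ∧ (Z * W)ᵀ = Z * W ∧ (W * Z)ᵀ = W * Z := by
  set U : Matrix (Fin p) (Fin p) ℝ := (hZ.eigenvectorUnitary : Matrix (Fin p) (Fin p) ℝ) with hU
  set d : Fin p → ℝ := hZ.eigenvalues with hd
  have hUU : star U * U = 1 := Unitary.coe_star_mul_self hZ.eigenvectorUnitary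
  have hspec : Z = U * diagonal d * star U := by
    have := hZ.spectral_theorem
    simpa using this
  refine ⟨U * diagonal (fun i => (d i)⁻¹) * star U, ?_, ?_, ?_, ?_⟩
  · rw [hspec, UDU_mul U hUU, UDU_mul U hUU]
    congr 2
    funext i
    rcases eq_or_ne (d i) 0 with h | h <;> field_simp [h]
  · rw [hspec, UDU_mul U hUU, UDU_mul U hUU]
    congr 2
    funext i
    rcases eq_or_ne (d i) 0 with h | h <;> field_simp [h]
  · rw [hspec, UDU_mul U hUU, UDU_transpose]
  · rw [hspec, UDU_mul U hUU, UDU_transpose]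

lemma dot_self_pos {n : ℕ} {v : Fin n → ℝ} (hv : v ≠ 0) : 0 < v ⬝ᵥ v := by
  have h1 : 0 ≤ v ⬝ᵥ v := Finset.sum_nonneg fun i _ => mul_self_nonneg (v i)
  rcases h1.lt_or_eq with h | h
  · exact h
  · exact absurd (dotProduct_self_eq_zero.mp h.symm) hv

lemma ker_orth {p n : ℕ} (Z : Matrix (Fin p) (Fin p) ℝ) (B : Matrix (Fin p) (Fin n) ℝ)
    (X : Matrix (Fin n) (Fin n) ℝ) (hP : (fromBlocks Z B Bᵀ X).PosSemidef)
    (u : Fin p → ℝ) (hu : Z *ᵥ u = 0) (x : Fin n → ℝ) : u ⬝ᵥ (B *ᵥ x) = 0 := by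
  set c : ℝ := u ⬝ᵥ (B *ᵥ x) with hc
  set k : ℝ := x ⬝ᵥ (X *ᵥ x) with hk
  have key : ∀ t : ℝ, 0 ≤ t * c + (t * c + k) := by
    intro t
    have h := (posSemidef_iff_dotProduct_mulVec.mp hP).2 (Sum.elim (t • u) x)
    rw [star_trivial, fromBlocks_mulVec, sumElim_dotProduct_sumElim] at h
    simp only [Sum.elim_comp_inl, Sum.elim_comp_inr] at h
    rw [mulVec_smul, hu, smul_zero, zero_add, mulVec_smul, dotProduct_add,
      smul_dotProduct, dotProduct_smul] at h
    have hxB : x ⬝ᵥ (Bᵀ *ᵥ u) = c := by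
      rw [dotProduct_mulVec, vecMul_transpose, dotProduct_comm]
    rw [hxB] at h
    simpa [smul_eq_mul, hc, hk] using h
  by_contra hne
  have h := key (-(k + 1) / (2 * c))
  have h2 : -(k + 1) / (2 * c) * c = -(k + 1) / 2 := by field_simp
  rw [h2] at h
  linarith

lemma completion {p n : ℕ} (Z : Matrix (Fin p) (Fin p) ℝ) (B : Matrix (Fin p) (Fin n) ℝ)
    (X : Matrix (Fin n) (Fin n) ℝ) (W : Matrix (Fin p) (Fin p) ℝ)
    (hZsym : Zᵀ = Z) (hb : ∀ x : Fin n → ℝ, Z *ᵥ (W *ᵥ (B *ᵥ x)) = B *ᵥ x)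
    (z : Fin p → ℝ) (x : Fin n → ℝ) :
    Sum.elim z x ⬝ᵥ (fromBlocks Z B Bᵀ X) *ᵥ Sum.elim z x
      = (z + W *ᵥ (B *ᵥ x)) ⬝ᵥ Z *ᵥ (z + W *ᵥ (B *ᵥ x))
        + x ⬝ᵥ (X - Bᵀ * W * B) *ᵥ x := by
  set b : Fin p → ℝ := B *ᵥ x with hbdef
  set w : Fin p → ℝ := W *ᵥ b with hwdef
  have hZw : Z *ᵥ w = b := hb x
  have lhs_eq : Sum.elim z x ⬝ᵥ (fromBlocks Z B Bᵀ X) *ᵥ Sum.elim z x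
      = z ⬝ᵥ (Z *ᵥ z) + z ⬝ᵥ b + (z ⬝ᵥ b + x ⬝ᵥ (X *ᵥ x)) := by
    rw [fromBlocks_mulVec, sumElim_dotProduct_sumElim]
    simp only [Sum.elim_comp_inl, Sum.elim_comp_inr]
    rw [dotProduct_add, dotProduct_add]
    have hxB : x ⬝ᵥ (Bᵀ *ᵥ z) = z ⬝ᵥ b := by
      rw [dotProduct_mulVec, vecMul_transpose, dotProduct_comm]
    rw [hxB]
  have hwZz : w ⬝ᵥ (Z *ᵥ z) = b ⬝ᵥ z := by
    rw [dotProduct_mulVec, ← mulVec_transpose, hZsym, hZw]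
  have hxS : x ⬝ᵥ (X - Bᵀ * W * B) *ᵥ x = x ⬝ᵥ (X *ᵥ x) - b ⬝ᵥ w := by
    rw [sub_mulVec, dotProduct_sub]
    congr 1
    rw [Matrix.mul_assoc, ← mulVec_mulVec, ← mulVec_mulVec, dotProduct_mulVec,
      vecMul_transpose, dotProduct_comm]
  rw [lhs_eq, hxS, mulVec_add, hZw, dotProduct_add, add_dotProduct, add_dotProduct,
    hwZz]
  have hwb : w ⬝ᵥ b = b ⬝ᵥ w := dotProduct_comm w b
  have hzb : b ⬝ᵥ z = z ⬝ᵥ b := dotProduct_comm b z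
  linarith

lemma rayleigh_lower {n : ℕ} (S : Matrix (Fin n) (Fin n) ℝ) (hS : S.IsHermitian) (c : ℝ)
    (hc : ∀ i, c ≤ hS.eigenvalues i) (x : Fin n → ℝ) :
    c * (x ⬝ᵥ x) ≤ x ⬝ᵥ S *ᵥ x := by
  set U : Matrix (Fin n) (Fin n) ℝ := (hS.eigenvectorUnitary : Matrix (Fin n) (Fin n) ℝ) with hU
  set d : Fin n → ℝ := hS.eigenvalues with hd
  have hUU' : U * star U = 1 := Unitary.coe_mul_star_self hS.eigenvectorUnitary
  have hspec : S = U * diagonal d * star U := by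
    have := hS.spectral_theorem
    simpa using this
  have hstar : star U = Uᵀ := by
    rw [Matrix.star_eq_conjTranspose, conjTranspose_eq_transpose_of_trivial]
  set y : Fin n → ℝ := Uᵀ *ᵥ x with hy
  have hyy : y ⬝ᵥ y = x ⬝ᵥ x := by
    rw [hy, dotProduct_mulVec, mulVec_transpose, vecMul_vecMul, ← mulVec_transpose,
      transpose_mul, transpose_transpose]
    rw [← hstar, hUU', one_mulVec]
  have hq : x ⬝ᵥ S *ᵥ x = ∑ i, d i * (y i)^2 := by
    rw [hspec, hstar, ← mulVec_mulVec, ← mulVec_mulVec, dotProduct_mulVec x U,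
      ← mulVec_transpose, ← hy]
    simp only [dotProduct, mulVec_diagonal]
    exact Finset.sum_congr rfl fun i _ => by ring
  have hyy' : y ⬝ᵥ y = ∑ i, (y i)^2 := by
    simp only [dotProduct]
    exact Finset.sum_congr rfl fun i _ => by ring
  rw [hq, ← hyy, hyy', Finset.mul_sum]
  exact Finset.sum_le_sum fun i _ =>
    mul_le_mul_of_nonneg_right (hc i) (sq_nonneg (y i))

end MPAux

-- Moore–Penrose pseudoinverse via its four characterizing properties.
open Classical in
noncomputable def moorePenrose {p : ℕ} (Z : Matrix (Fin p) (Fin p) ℝ) :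
    Matrix (Fin p) (Fin p) ℝ :=
  if h : ∃ W : Matrix (Fin p) (Fin p) ℝ,
      Z * W * Z = Z ∧ W * Z * W = W ∧ (Z * W)ᵀ = Z * W ∧ (W * Z)ᵀ = W * Z
  then h.choose else 0

theorem schur_complement_partial_min {p n : ℕ}
    (Z : Matrix (Fin p) (Fin p) ℝ) (B : Matrix (Fin p) (Fin n) ℝ)
    (X : Matrix (Fin n) (Fin n) ℝ)
    (hP : (fromBlocks Z B Bᵀ X).PosSemidef)
    (S : Matrix (Fin n) (Fin n) ℝ) (hS : S = X - Bᵀ * moorePenrose Z * B)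
    (lmin : ℝ)
    (hlmin : lmin = sInf {μ : ℝ | ∃ v : Fin n → ℝ, v ≠ 0 ∧ S.mulVec v = μ • v}) :
    (∀ (z : Fin p → ℝ) (x : Fin n → ℝ), x ≠ 0 →
        lmin ≤ (1 / ∑ i, x i ^ 2) *
          (Sum.elim z x ⬝ᵥ (fromBlocks Z B Bᵀ X).mulVec (Sum.elim z x))) ∧
      (∀ v : Fin n → ℝ, v ≠ 0 → S.mulVec v = lmin • v →
        (1 / ∑ i, v i ^ 2) *
            (Sum.elim (-(moorePenrose Z * B).mulVec v) v ⬝ᵥ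
              (fromBlocks Z B Bᵀ X).mulVec
                (Sum.elim (-(moorePenrose Z * B).mulVec v) v)) = lmin) := by
  -- extract hermitian-ness of the blocks
  have hPh := hP.1
  rw [isHermitian_fromBlocks_iff] at hPh
  obtain ⟨hZh, -, -, hXh⟩ := hPh
  have hZt : Zᵀ = Z := by
    rw [← conjTranspose_eq_transpose_of_trivial]; exact hZh
  have hXt : Xᵀ = X := by
    rw [← conjTranspose_eq_transpose_of_trivial]; exact hXh
  -- properties of the Moore–Penrose inverse
  have hEx := mp_exists Z hZh
  set W : Matrix (Fin p) (Fin p) ℝ := moorePenrose Z with hWdef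
  have hWp : Z * W * Z = Z ∧ W * Z * W = W ∧ (Z * W)ᵀ = Z * W ∧ (W * Z)ᵀ = W * Z := by
    rw [hWdef, moorePenrose, dif_pos hEx]
    exact hEx.choose_spec
  obtain ⟨hZWZ, hWZW, hZWt, hWZt⟩ := hWp
  have hWsym : Wᵀ = W := by
    refine mp_unique Z Wᵀ W ⟨?_, ?_, ?_, ?_⟩ ⟨hZWZ, hWZW, hZWt, hWZt⟩
    · calc Z * Wᵀ * Z = (Z * W * Z)ᵀ := by
            simp only [transpose_mul, transpose_transpose, hZt, Matrix.mul_assoc]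
      _ = Z := by rw [hZWZ, hZt]
    · calc Wᵀ * Z * Wᵀ = (W * Z * W)ᵀ := by
            simp only [transpose_mul, transpose_transpose, hZt, Matrix.mul_assoc]
      _ = Wᵀ := by rw [hWZW]
    · calc (Z * Wᵀ)ᵀ = W * Z := by rw [transpose_mul, transpose_transpose, hZt]
      _ = (W * Z)ᵀ := hWZt.symm
      _ = Zᵀ * Wᵀ := by rw [transpose_mul]
      _ = Z * Wᵀ := by rw [hZt]
    · calc (Wᵀ * Z)ᵀ = Zᵀ * W := by rw [transpose_mul, transpose_transpose]
      _ = Z * W := by rw [hZt]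
      _ = (Z * W)ᵀ := hZWt.symm
      _ = Wᵀ * Zᵀ := by rw [transpose_mul]
      _ = Wᵀ * Z := by rw [hZt]
  have hZWeq : Z * W = W * Z := by
    calc Z * W = Zᵀ * Wᵀ := by rw [hZt, hWsym]
    _ = (W * Z)ᵀ := (transpose_mul W Z).symm
    _ = W * Z := hWZt
  -- the column space property : Z W B = B (vector form)
  have hb : ∀ x : Fin n → ℝ, Z *ᵥ (W *ᵥ (B *ᵥ x)) = B *ᵥ x := by
    intro x
    set b : Fin p → ℝ := B *ᵥ x with hbdef
    have h1 : ∀ y : Fin p → ℝ, Z *ᵥ ((1 - W * Z) *ᵥ y) = 0 := by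
      intro y
      rw [mulVec_mulVec, Matrix.mul_sub, Matrix.mul_one, ← Matrix.mul_assoc, hZWZ,
        sub_self, zero_mulVec]
    have h2 : ∀ y : Fin p → ℝ, y ⬝ᵥ ((1 - W * Z)ᵀ *ᵥ b) = 0 := by
      intro y
      rw [dotProduct_mulVec, vecMul_transpose]
      exact ker_orth Z B X hP _ (h1 y) x
    have h3 : (1 - W * Z)ᵀ *ᵥ b = 0 :=
      dotProduct_self_eq_zero.mp (h2 ((1 - W * Z)ᵀ *ᵥ b))
    rw [transpose_sub, transpose_one, hWZt, sub_mulVec, one_mulVec, sub_eq_zero] at h3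
    calc Z *ᵥ (W *ᵥ b) = (Z * W) *ᵥ b := by rw [mulVec_mulVec]
    _ = (W * Z) *ᵥ b := by rw [hZWeq]
    _ = b := h3.symm
  -- S is symmetric
  have hSt : S.IsHermitian := by
    show Sᴴ = S
    rw [conjTranspose_eq_transpose_of_trivial, hS]
    rw [transpose_sub, hXt]
    congr 1
    rw [transpose_mul, transpose_mul, transpose_transpose, hWsym, Matrix.mul_assoc]
  -- Z is positive semidefinite as quadratic form
  have hZpsd : ∀ y : Fin p → ℝ, 0 ≤ y ⬝ᵥ Z *ᵥ y := by
    intro y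
    have h := (posSemidef_iff_dotProduct_mulVec.mp hP).2 (Sum.elim y 0)
    rw [star_trivial, fromBlocks_mulVec, sumElim_dotProduct_sumElim] at h
    simp only [Sum.elim_comp_inl, Sum.elim_comp_inr] at h
    simpa using h
  -- completion of squares with S
  have hcomp : ∀ (z : Fin p → ℝ) (x : Fin n → ℝ),
      Sum.elim z x ⬝ᵥ (fromBlocks Z B Bᵀ X) *ᵥ Sum.elim z x
        = (z + W *ᵥ (B *ᵥ x)) ⬝ᵥ Z *ᵥ (z + W *ᵥ (B *ᵥ x)) + x ⬝ᵥ S *ᵥ x := by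
    intro z x
    rw [hS]
    exact completion Z B X W hZt hb z x
  constructor
  · -- part 1
    intro z x hx
    rcases Nat.eq_zero_or_pos n with hn | hn
    · subst hn
      exact absurd (funext fun i => i.elim0) hx
    have : Nonempty (Fin n) := ⟨⟨0, hn⟩⟩
    obtain ⟨i₀, -, hmin⟩ := Finset.exists_min_image Finset.univ hSt.eigenvalues
      ⟨⟨0, hn⟩, Finset.mem_univ _⟩
    set lam : ℝ := hSt.eigenvalues i₀ with hlam
    have hray : ∀ y : Fin n → ℝ, lam * (y ⬝ᵥ y) ≤ y ⬝ᵥ S *ᵥ y :=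
      rayleigh_lower S hSt lam fun i => hmin i (Finset.mem_univ i)
    have hmem : lam ∈ {μ : ℝ | ∃ v : Fin n → ℝ, v ≠ 0 ∧ S.mulVec v = μ • v} :=
      ⟨_, mt (WithLp.ofLp_eq_zero 2).mp (hSt.eigenvectorBasis.orthonormal.ne_zero i₀), hSt.mulVec_eigenvectorBasis i₀⟩
    have hlb : ∀ μ ∈ {μ : ℝ | ∃ v : Fin n → ℝ, v ≠ 0 ∧ S.mulVec v = μ • v}, lam ≤ μ := by
      rintro μ ⟨v, hv, hev⟩
      have h1 := hray v
      rw [show S *ᵥ v = S.mulVec v from rfl, hev, dotProduct_smul, smul_eq_mul] at h1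
      exact le_of_mul_le_mul_right h1 (dot_self_pos hv)
    have hlmin_le : lmin ≤ lam := by
      rw [hlmin]
      exact csInf_le ⟨lam, hlb⟩ hmem
    have hsum : ∑ i, x i ^ 2 = x ⬝ᵥ x := by
      simp only [dotProduct]
      exact Finset.sum_congr rfl fun i _ => by ring
    have hxx : (0:ℝ) < x ⬝ᵥ x := dot_self_pos hx
    have hq : lmin * (x ⬝ᵥ x) ≤
        Sum.elim z x ⬝ᵥ (fromBlocks Z B Bᵀ X) *ᵥ Sum.elim z x := by
      rw [hcomp z x]
      have h1 := hZpsd (z + W *ᵥ (B *ᵥ x))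
      have h2 := hray x
      have h3 : lmin * (x ⬝ᵥ x) ≤ lam * (x ⬝ᵥ x) :=
        mul_le_mul_of_nonneg_right hlmin_le hxx.le
      linarith
    rw [hsum]
    calc lmin = (lmin * (x ⬝ᵥ x)) / (x ⬝ᵥ x) := by field_simp
    _ ≤ (Sum.elim z x ⬝ᵥ (fromBlocks Z B Bᵀ X) *ᵥ Sum.elim z x) / (x ⬝ᵥ x) :=
        (div_le_div_iff_of_pos_right hxx).mpr hq
    _ = 1 / (x ⬝ᵥ x) * (Sum.elim z x ⬝ᵥ (fromBlocks Z B Bᵀ X) *ᵥ Sum.elim z x) := by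
        ring
  · -- part 2
    intro v hv hev
    have hsum : ∑ i, v i ^ 2 = v ⬝ᵥ v := by
      simp only [dotProduct]
      exact Finset.sum_congr rfl fun i _ => by ring
    have hvv : (0:ℝ) < v ⬝ᵥ v := dot_self_pos hv
    have hzero : -(W * B).mulVec v + W *ᵥ (B *ᵥ v) = 0 := by
      rw [show (W * B).mulVec v = W *ᵥ (B *ᵥ v) by rw [mulVec_mulVec]]
      exact neg_add_cancel _
    have hq := hcomp (-(W * B).mulVec v) v
    rw [hzero] at hq
    rw [hq]
    have h0 : (0 : Fin p → ℝ) ⬝ᵥ Z *ᵥ (0 : Fin p → ℝ) = 0 := by simp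
    rw [h0, zero_add]
    rw [show S *ᵥ v = S.mulVec v from rfl, hev, dotProduct_smul, smul_eq_mul, hsum]
    field_simp
end

section
/- If P = [[Z, B], [Bᵀ, X]] is symmetric positive semidefinite with blocks as above, then for all z ∈ ℝ^p and x ∈ ℝ^n, [z; x]ᵀ P [z; x] ≥ λ_min(X − Bᵀ Z⁻ B) · ‖x‖₂², where Z⁻ is the Moore–Penrose pseudoinverse of Z. -/
open Matrix

lemma exists_moorePenrose {p : ℕ} {Z : Matrix (Fin p) (Fin p) ℝ} (hZ : Z.IsHermitian) :
    ∃ W : Matrix (Fin p) (Fin p) ℝ,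
      Z * W * Z = Z ∧ W * Z * W = W ∧ (Z * W)ᵀ = Z * W ∧ (W * Z)ᵀ = W * Z := by
  classical
  set U : Matrix (Fin p) (Fin p) ℝ := ↑hZ.eigenvectorUnitary with hUdef
  have hU1 : star U * U = 1 := mem_unitaryGroup_iff'.mp hZ.eigenvectorUnitary.2
  set d := hZ.eigenvalues with hd
  set d' : Fin p → ℝ := fun i => if d i = 0 then 0 else (d i)⁻¹ with hd'
  have hspec : Z = U * diagonal d * star U := by
    have := hZ.spectral_theorem
    simp only [Unitary.conjStarAlgAut_apply] at this
    exact this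
  have key : ∀ e f : Fin p → ℝ,
      (U * diagonal e * star U) * (U * diagonal f * star U)
        = U * diagonal (fun i => e i * f i) * star U := by
    intro e f
    calc (U * diagonal e * star U) * (U * diagonal f * star U)
        = U * (diagonal e * ((star U * U) * (diagonal f * star U))) := by
          simp only [Matrix.mul_assoc]
      _ = U * (diagonal e * diagonal f) * star U := by
          rw [hU1, one_mul, Matrix.mul_assoc, Matrix.mul_assoc]
      _ = U * diagonal (fun i => e i * f i) * star U := by
          rw [diagonal_mul_diagonal]
  have sym : ∀ e : Fin p → ℝ, (U * diagonal e * star U)ᵀ = U * diagonal e * star U := by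
    intro e
    rw [← conjTranspose_eq_transpose_of_trivial]
    simp [Matrix.star_eq_conjTranspose, conjTranspose_mul, diagonal_conjTranspose,
      Matrix.mul_assoc]
  have hdd : (fun i => (fun i => d i * d' i) i * d i) = d := by
    funext i; by_cases h : d i = 0 <;> simp [hd', h]
  have hdd' : (fun i => (fun i => d' i * d i) i * d' i) = d' := by
    funext i; by_cases h : d i = 0 <;> simp [hd', h]
  refine ⟨U * diagonal d' * star U, ?_, ?_, ?_, ?_⟩
  · rw [hspec, key, key, hdd]
  · rw [hspec, key, key, hdd']
  · rw [hspec, key, sym]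
  · rw [hspec, key, sym]

lemma slope_zero {a c : ℝ} (h : ∀ t : ℝ, 0 ≤ 2 * t * a + c) : a = 0 := by
  by_contra ha
  have h2 : 2 * (-(c+1)/(2*a)) * a + c = -1 := by field_simp; ring
  linarith [h (-(c+1)/(2*a))]

lemma mulVec_dot {m k : ℕ} (A : Matrix (Fin m) (Fin k) ℝ) (x : Fin k → ℝ) (y : Fin m → ℝ) :
    (A *ᵥ x) ⬝ᵥ y = x ⬝ᵥ (Aᵀ *ᵥ y) := by
  rw [Matrix.dotProduct_mulVec, vecMul_transpose, dotProduct_comm]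

theorem psd_block_quadratic_lower_bound {p n : ℕ}
    (Z : Matrix (Fin p) (Fin p) ℝ) (B : Matrix (Fin p) (Fin n) ℝ)
    (X : Matrix (Fin n) (Fin n) ℝ)
    (hP : (fromBlocks Z B Bᵀ X).PosSemidef)
    (lmin : ℝ)
    (hlmin : lmin = sInf {μ : ℝ | ∃ v : Fin n → ℝ,
      v ≠ 0 ∧ (X - Bᵀ * moorePenrose Z * B).mulVec v = μ • v}) :
    ∀ (z : Fin p → ℝ) (x : Fin n → ℝ),
      Sum.elim z x ⬝ᵥ (fromBlocks Z B Bᵀ X).mulVec (Sum.elim z x) ≥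
        lmin * ∑ i, x i ^ 2 := by
  classical
  have hPform : ∀ (z : Fin p → ℝ) (x : Fin n → ℝ),
      0 ≤ Sum.elim z x ⬝ᵥ (fromBlocks Z B Bᵀ X).mulVec (Sum.elim z x) := by
    intro z x
    simpa using hP.dotProduct_mulVec_nonneg (Sum.elim z x)
  have hZ : Z.PosSemidef := by
    have := hP.submatrix Sum.inl
    exact this
  have hX : X.PosSemidef := by
    have := hP.submatrix Sum.inr
    exact this
  have hZsym : Zᵀ = Z := by
    rw [← conjTranspose_eq_transpose_of_trivial]; exact hZ.1
  have hXsym : Xᵀ = X := by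
    rw [← conjTranspose_eq_transpose_of_trivial]; exact hX.1
  -- Moore-Penrose properties
  have hex := exists_moorePenrose hZ.1
  set W := moorePenrose Z with hWdef
  have hWe : W = hex.choose := by rw [hWdef, moorePenrose, dif_pos hex]
  obtain ⟨h1, h2, h3, h4⟩ := hex.choose_spec
  rw [← hWe] at h1 h2 h3 h4
  -- kernel of Z is inside kernel of Bᵀ
  have hker : ∀ u : Fin p → ℝ, Z *ᵥ u = 0 → Bᵀ *ᵥ u = 0 := by
    intro u hu
    funext j
    have hsw : Pi.single j 1 ⬝ᵥ (Bᵀ *ᵥ u) = u ⬝ᵥ (B *ᵥ Pi.single j 1) := by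
      rw [dotProduct_comm, mulVec_dot, transpose_transpose]
    have ha : u ⬝ᵥ (B *ᵥ Pi.single j 1) = 0 := by
      apply slope_zero (c := Pi.single j 1 ⬝ᵥ (X *ᵥ Pi.single j 1))
      intro t
      have h5 := hPform (t • u) (Pi.single j 1)
      simp only [fromBlocks_mulVec, sumElim_dotProduct_sumElim, Sum.elim_comp_inl,
        Sum.elim_comp_inr, Matrix.mulVec_smul, hu, smul_zero, zero_add, dotProduct_add,
        smul_dotProduct, dotProduct_smul, hsw, smul_eq_mul] at h5
      linarith
    have hj : (Bᵀ *ᵥ u) j = u ⬝ᵥ (B *ᵥ Pi.single j 1) := by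
      rw [← hsw]
      simp [mulVec, dotProduct, Pi.single_apply]
    rw [hj, ha]
    rfl
  -- Q := 1 - Z * W kills B
  have hQZ : (1 - Z * W) * Z = 0 := by
    rw [sub_mul, one_mul, h1, sub_self]
  have hQT : (1 - Z * W)ᵀ = 1 - Z * W := by
    rw [transpose_sub, transpose_one, h3]
  have hZQ : Z * (1 - Z * W) = 0 := by
    have : ((1 - Z * W)ᵀ * Zᵀ)ᵀ = Z * (1 - Z * W) := by
      rw [← transpose_mul, transpose_transpose]
    rw [← this, hQT, hZsym, hQZ, transpose_zero]
  have hBQ : Bᵀ * (1 - Z * W) = 0 := by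
    ext i j
    have hcol : Z *ᵥ (fun k => (1 - Z * W) k j) = 0 := by
      funext i'
      have := congrFun (congrFun hZQ i') j
      simpa [mulVec, dotProduct, Matrix.mul_apply] using this
    have := congrFun (hker _ hcol) i
    simpa [mulVec, dotProduct, Matrix.mul_apply, transpose_apply] using this
  have I1 : Z * (W * B) = B := by
    have hqb : (1 - Z * W) * B = 0 := by
      have h6 : ((Bᵀ * (1 - Z * W))ᵀ) = (1 - Z * W) * B := by
        rw [transpose_mul, transpose_transpose, hQT]
      rw [← h6, hBQ, transpose_zero]
    rw [Matrix.sub_mul, Matrix.one_mul, sub_eq_zero] at hqb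
    rw [← Matrix.mul_assoc]
    exact hqb.symm
  have hWtZ : Wᵀ * Z = Z * W := by
    calc Wᵀ * Z = Wᵀ * Zᵀ := by rw [hZsym]
      _ = (Z * W)ᵀ := (transpose_mul Z W).symm
      _ = Z * W := h3
  have I2 : (W * B)ᵀ * Z = Bᵀ := by
    calc (W * B)ᵀ * Z = Bᵀ * (Wᵀ * Z) := by rw [transpose_mul, Matrix.mul_assoc]
      _ = Bᵀ * (Z * W) := by rw [hWtZ]
      _ = ((Z * W)ᵀ * B)ᵀ := by rw [transpose_mul, transpose_transpose]
      _ = ((Z * W) * B)ᵀ := by rw [h3]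
      _ = Bᵀ := by rw [Matrix.mul_assoc, I1]
  -- the key algebraic identity
  set S : Matrix (Fin n) (Fin n) ℝ := X - Bᵀ * W * B with hSdef
  have key : ∀ (z : Fin p → ℝ) (x : Fin n → ℝ),
      Sum.elim z x ⬝ᵥ (fromBlocks Z B Bᵀ X).mulVec (Sum.elim z x)
        = (z + (W * B) *ᵥ x) ⬝ᵥ (Z *ᵥ (z + (W * B) *ᵥ x)) + x ⬝ᵥ (S *ᵥ x) := by
    intro z x
    have e1 : z ⬝ᵥ (Z *ᵥ ((W * B) *ᵥ x)) = z ⬝ᵥ (B *ᵥ x) := by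
      rw [Matrix.mulVec_mulVec, I1]
    have e2 : ((W * B) *ᵥ x) ⬝ᵥ (Z *ᵥ z) = x ⬝ᵥ (Bᵀ *ᵥ z) := by
      rw [mulVec_dot, Matrix.mulVec_mulVec, I2]
    have e3 : ((W * B) *ᵥ x) ⬝ᵥ (Z *ᵥ ((W * B) *ᵥ x)) = x ⬝ᵥ ((Bᵀ * (W * B)) *ᵥ x) := by
      rw [mulVec_dot, Matrix.mulVec_mulVec, Matrix.mulVec_mulVec, I2]
    have e4 : x ⬝ᵥ (S *ᵥ x) = x ⬝ᵥ (X *ᵥ x) - x ⬝ᵥ ((Bᵀ * (W * B)) *ᵥ x) := by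
      rw [hSdef, Matrix.mul_assoc, Matrix.sub_mulVec, dotProduct_sub]
    rw [fromBlocks_mulVec, sumElim_dotProduct_sumElim, Sum.elim_comp_inl, Sum.elim_comp_inr]
    rw [Matrix.mulVec_add]
    simp only [dotProduct_add, add_dotProduct]
    rw [e1, e2, e3, e4]
    ring
  have hSpsd : ∀ y : Fin n → ℝ, 0 ≤ y ⬝ᵥ (S *ᵥ y) := by
    intro y
    have h7 := hPform (-((W * B) *ᵥ y)) y
    rw [key (-((W * B) *ᵥ y)) y, neg_add_cancel] at h7
    simpa using h7
  -- eigenvalue set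
  set E : Set ℝ := {μ : ℝ | ∃ v : Fin n → ℝ, v ≠ 0 ∧ S *ᵥ v = μ • v} with hE
  have hEnn : ∀ μ ∈ E, (0:ℝ) ≤ μ := by
    rintro μ ⟨v, hv, hvm⟩
    have hvv : 0 < v ⬝ᵥ v := by
      rcases Function.ne_iff.mp hv with ⟨i, hi⟩
      simp only [Pi.zero_apply] at hi
      have h8 : 0 < v i * v i := mul_self_pos.mpr hi
      have h9 : ∀ j, 0 ≤ v j * v j := fun j => mul_self_nonneg _
      calc (0:ℝ) < v i * v i := h8
        _ ≤ ∑ j, v j * v j := Finset.single_le_sum (fun j _ => h9 j) (Finset.mem_univ i)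
        _ = v ⬝ᵥ v := rfl
    have : μ * (v ⬝ᵥ v) = v ⬝ᵥ (S *ᵥ v) := by
      rw [hvm, dotProduct_smul]; rfl
    nlinarith [hSpsd v]
  have hBdd : BddBelow E := ⟨0, fun μ hμ => hEnn μ hμ⟩
  intro z x
  rcases eq_or_ne x 0 with hx0 | hx0
  · subst hx0
    have := hPform z 0
    simpa using this
  · -- main case : x ≠ 0
    -- S is symmetric
    have hBW : (Bᵀ * W * B)ᵀ = Bᵀ * W * B := by
      have step : Bᵀ * (Wᵀ * B) = Bᵀ * W * B := by
        calc Bᵀ * (Wᵀ * B) = Bᵀ * (Wᵀ * (Z * (W * B))) := by rw [I1]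
          _ = ((W * B)ᵀ * Z) * (W * B) := by
              rw [transpose_mul]; simp only [Matrix.mul_assoc]
          _ = Bᵀ * (W * B) := by rw [I2]
          _ = Bᵀ * W * B := by rw [Matrix.mul_assoc]
      calc (Bᵀ * W * B)ᵀ = Bᵀ * (Bᵀ * W)ᵀ := by rw [transpose_mul]
        _ = Bᵀ * (Wᵀ * B) := by rw [transpose_mul, transpose_transpose]
        _ = Bᵀ * W * B := step
    have hSsym : Sᵀ = S := by
      rw [hSdef, transpose_sub, hXsym, hBW]
    have hSherm : S.IsHermitian := by
      show Sᴴ = S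
      rw [conjTranspose_eq_transpose_of_trivial, hSsym]
    set T : EuclideanSpace ℝ (Fin n) →ₗ[ℝ] EuclideanSpace ℝ (Fin n) :=
      Matrix.toEuclideanLin S with hT
    have hTsym : T.IsSymmetric := (Matrix.isHermitian_iff_isSymmetric).1 hSherm
    have hinner : ∀ w : EuclideanSpace ℝ (Fin n),
        (inner ℝ (T w) w : ℝ) =
          ((WithLp.equiv 2 (Fin n → ℝ)) w) ⬝ᵥ (S *ᵥ ((WithLp.equiv 2 (Fin n → ℝ)) w)) := by
      intro w
      simp only [PiLp.inner_apply, RCLike.inner_apply, conj_trivial]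
      rfl
    have hqf : ∀ w : EuclideanSpace ℝ (Fin n), 0 ≤ (inner ℝ (T w) w : ℝ) := by
      intro w
      rw [hinner]
      exact hSpsd _
    have hx' : ((WithLp.equiv 2 (Fin n → ℝ)).symm x) ≠ 0 := by
      simpa using hx0
    have : Nontrivial (EuclideanSpace ℝ (Fin n)) :=
      nontrivial_of_ne _ 0 hx'
    have hev := LinearMap.IsSymmetric.hasEigenvalue_iInf_of_finiteDimensional hTsym
    set μ0 : ℝ := ⨅ v : { v : EuclideanSpace ℝ (Fin n) // v ≠ 0 },
      RCLike.re (inner ℝ (T v) (v : EuclideanSpace ℝ (Fin n)) : ℝ) /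
        ‖(v : EuclideanSpace ℝ (Fin n))‖ ^ 2 with hμ0
    rw [RCLike.ofReal_real_eq_id] at hev
    obtain ⟨v, hv⟩ := Module.End.HasEigenvalue.exists_hasEigenvector hev
    have hvs : T v = μ0 • v := hv.apply_eq_smul
    -- μ0 is in the eigenvalue set E
    have hμ0E : μ0 ∈ E := by
      refine ⟨(WithLp.equiv 2 (Fin n → ℝ)) v, ?_, ?_⟩
      · simpa using hv.right
      · calc S *ᵥ ((WithLp.equiv 2 (Fin n → ℝ)) v)
            = (WithLp.equiv 2 (Fin n → ℝ)) (T v) := rfl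
          _ = μ0 • (WithLp.equiv 2 (Fin n → ℝ)) v := by rw [hvs]; rfl
    have hlμ : lmin ≤ μ0 := by
      rw [hlmin]
      exact csInf_le hBdd hμ0E
    -- Rayleigh bound at x
    have hsum : (0:ℝ) < ∑ i, x i ^ 2 := by
      rcases Function.ne_iff.mp hx0 with ⟨i, hi⟩
      simp only [Pi.zero_apply] at hi
      have := Finset.single_le_sum (f := fun j => x j ^ 2)
        (fun j _ => sq_nonneg (x j)) (Finset.mem_univ i)
      have h8 : 0 < x i ^ 2 := lt_of_le_of_ne (sq_nonneg _) (Ne.symm (pow_ne_zero 2 hi))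
      simpa using lt_of_lt_of_le h8 this
    have hnorm : ‖(WithLp.equiv 2 (Fin n → ℝ)).symm x‖ ^ 2 = ∑ i, x i ^ 2 := by
      rw [EuclideanSpace.norm_eq]
      rw [Real.sq_sqrt (by positivity)]
      congr 1
      funext i
      rw [Real.norm_eq_abs, sq_abs]
      rfl
    have hray : μ0 ≤ (x ⬝ᵥ (S *ᵥ x)) / (∑ i, x i ^ 2) := by
      have hle := ciInf_le (f := fun v : { v : EuclideanSpace ℝ (Fin n) // v ≠ 0 } =>
        RCLike.re (inner ℝ (T v) (v : EuclideanSpace ℝ (Fin n)) : ℝ) /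
          ‖(v : EuclideanSpace ℝ (Fin n))‖ ^ 2)
        ⟨0, by rintro r ⟨w, rfl⟩; exact div_nonneg (by simpa using hqf w) (sq_nonneg _)⟩
        ⟨(WithLp.equiv 2 (Fin n → ℝ)).symm x, hx'⟩
      rw [hμ0]
      refine le_trans hle ?_
      rw [hnorm]
      have : (inner ℝ (T ((WithLp.equiv 2 (Fin n → ℝ)).symm x))
          ((WithLp.equiv 2 (Fin n → ℝ)).symm x) : ℝ) = x ⬝ᵥ (S *ᵥ x) := by
        rw [hinner]
        rfl
      simp only [RCLike.re_to_real]
      rw [this]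
    have hqx : μ0 * (∑ i, x i ^ 2) ≤ x ⬝ᵥ (S *ᵥ x) :=
      (le_div_iff₀ hsum).mp hray
    -- conclude
    rw [ge_iff_le, key z x]
    have hZform : 0 ≤ (z + (W * B) *ᵥ x) ⬝ᵥ (Z *ᵥ (z + (W * B) *ᵥ x)) := by
      simpa using hZ.dotProduct_mulVec_nonneg (z + (W * B) *ᵥ x)
    have : lmin * (∑ i, x i ^ 2) ≤ μ0 * (∑ i, x i ^ 2) :=
      mul_le_mul_of_nonneg_right hlμ (le_of_lt hsum)
    linarith
end

section
/- Let M be a symmetric (p+n)×(p+n) real matrix. M is partially positive definite with respect to the last n components (i.e., M is positive semidefinite and [z; x]ᵀ M [z; x] > 0 for every [z; x] with x ≠ 0) if and only if there exists a class-K function κ such that κ(‖x‖) ≤ [z; x]ᵀ M [z; x] for all z ∈ ℝ^p and x ∈ ℝ^n. -/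
open Matrix

/-- A class-K function: continuous and strictly increasing on `[0, ∞)`,
nonnegative there, with `κ 0 = 0`. -/
def IsClassK (κ : ℝ → ℝ) : Prop :=
  ContinuousOn κ (Set.Ici 0) ∧ StrictMonoOn κ (Set.Ici 0) ∧ κ 0 = 0 ∧
    ∀ r ∈ Set.Ici (0 : ℝ), 0 ≤ κ r

private lemma key_bound {p n : ℕ}
    (M : Matrix (Fin p ⊕ Fin n) (Fin p ⊕ Fin n) ℝ) (hM : M.IsSymm)
    (hpsd : M.PosSemidef)
    (hpos : ∀ (z : Fin p → ℝ) (x : Fin n → ℝ), x ≠ 0 →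
        0 < Sum.elim z x ⬝ᵥ M.mulVec (Sum.elim z x)) :
    ∃ μ : ℝ, 0 < μ ∧ ∀ (z : Fin p → ℝ) (x : Fin n → ℝ),
      μ * (∑ i, x i ^ 2) ≤ Sum.elim z x ⬝ᵥ M.mulVec (Sum.elim z x) := by
  classical
  set V := (Fin p ⊕ Fin n) → ℝ with hV
  set q : V → ℝ := fun y => y ⬝ᵥ M.mulVec y with hq
  -- basic facts
  have hq0 : ∀ y : V, 0 ≤ q y := by
    intro y
    simpa using hpsd.dotProduct_mulVec_nonneg y
  have helim : ∀ y : V, Sum.elim (fun j => y (Sum.inl j)) (fun i => y (Sum.inr i)) = y := by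
    intro y; funext w; cases w <;> rfl
  have hker_x : ∀ y : V, M.mulVec y = 0 → ∀ i, y (Sum.inr i) = 0 := by
    intro y hy i
    by_contra h
    have hx : (fun i => y (Sum.inr i)) ≠ 0 := fun hc => h (congrFun hc i)
    have := hpos (fun j => y (Sum.inl j)) _ hx
    rw [helim y, hy] at this
    simp at this
  have hzero : ∀ y : V, q y = 0 ↔ M.mulVec y = 0 := by
    intro y
    simpa using hpsd.dotProduct_mulVec_zero_iff y
  have hsmul : ∀ (a : ℝ) (y : V), q (a • y) = a ^ 2 * q y := by
    intro a y
    show (a • y) ⬝ᵥ M.mulVec (a • y) = a ^ 2 * (y ⬝ᵥ M.mulVec y)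
    rw [Matrix.mulVec_smul, smul_dotProduct, dotProduct_smul, smul_eq_mul,
      smul_eq_mul]
    ring
  have hcross : ∀ u w : V, M.mulVec u = 0 → q (u + w) = q w := by
    intro u w hu
    have hvm : M.vecMul u = 0 := by
      rw [← Matrix.mulVec_transpose, hM.eq, hu]
    have hc : u ⬝ᵥ M.mulVec w = 0 := by
      rw [Matrix.dotProduct_mulVec, hvm, zero_dotProduct]
    show (u + w) ⬝ᵥ M.mulVec (u + w) = w ⬝ᵥ M.mulVec w
    rw [Matrix.mulVec_add, dotProduct_add, add_dotProduct, add_dotProduct]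
    rw [Matrix.dotProduct_mulVec u M u, hvm, zero_dotProduct, hc, hu,
      dotProduct_zero]
    ring
  set K := LinearMap.ker M.mulVecLin with hK
  obtain ⟨W, hKW⟩ := Submodule.exists_isCompl K
  by_cases hbot : W = ⊥
  · -- degenerate case : M = 0 on everything
    have hKtop : K = ⊤ := by
      have := hKW.codisjoint
      rw [hbot, codisjoint_bot] at this
      exact this
    refine ⟨1, one_pos, fun z x => ?_⟩
    have hy : M.mulVec (Sum.elim z x) = 0 := by
      have : Sum.elim z x ∈ K := by rw [hKtop]; trivial
      simpa [hK, Matrix.mulVecLin_apply] using this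
    have hx0 : ∀ i, x i = 0 := fun i => hker_x _ hy i
    have : (∑ i, x i ^ 2) = 0 := by
      apply Finset.sum_eq_zero; intro i _; rw [hx0 i]; ring
    rw [this, hy]
    simp
  · -- main case
    obtain ⟨w₀, hw₀W, hw₀⟩ := (Submodule.ne_bot_iff W).mp hbot
    set e : ↥W := ⟨w₀, hw₀W⟩ with he
    have he0 : e ≠ 0 := by
      intro h
      exact hw₀ (by simpa [he] using congrArg Subtype.val h)
    have hcontq : Continuous q := by
      simp only [hq, dotProduct, Matrix.mulVec]
      fun_prop
    have hcontf : Continuous fun w : ↥W => q (w : V) :=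
      hcontq.comp continuous_subtype_val
    have hsphne : (Metric.sphere (0 : ↥W) 1).Nonempty := by
      refine ⟨(‖e‖⁻¹ : ℝ) • e, ?_⟩
      rw [mem_sphere_zero_iff_norm]
      exact norm_smul_inv_norm (𝕜 := ℝ) he0
    obtain ⟨v₀, hv₀S, hmin⟩ :=
      (isCompact_sphere (0 : ↥W) 1).exists_isMinOn hsphne hcontf.continuousOn
    have hv₀norm : ‖v₀‖ = 1 := by rwa [mem_sphere_zero_iff_norm] at hv₀S
    have hv₀ne : (v₀ : V) ≠ 0 := by
      intro h
      have : v₀ = 0 := Subtype.ext h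
      rw [this] at hv₀norm; simp at hv₀norm
    set lam : ℝ := q (v₀ : V) with hlam
    have hlampos : 0 < lam := by
      rcases lt_or_eq_of_le (hq0 (v₀ : V)) with h | h
      · exact h
      · exfalso
        have hMv : M.mulVec (v₀ : V) = 0 := (hzero _).mp h.symm
        have hvK : (v₀ : V) ∈ K := by simpa [hK, Matrix.mulVecLin_apply] using hMv
        have := (Submodule.disjoint_def.mp hKW.disjoint) (v₀ : V) hvK v₀.2
        exact hv₀ne this
    have hWbound : ∀ w : ↥W, lam * ‖w‖ ^ 2 ≤ q (w : V) := by
      intro w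
      rcases eq_or_ne w 0 with rfl | hw
      · simp [hq]
      · have hcpos : (0 : ℝ) < ‖w‖ := norm_pos_iff.mpr hw
        have hmem : (‖w‖⁻¹ : ℝ) • w ∈ Metric.sphere (0 : ↥W) 1 := by
          rw [mem_sphere_zero_iff_norm]
          exact norm_smul_inv_norm (𝕜 := ℝ) hw
        have hle : lam ≤ q ((‖w‖⁻¹ : ℝ) • (w : V)) := hmin hmem
        rw [hsmul] at hle
        have h2 : lam * ‖w‖ ^ 2 ≤ (‖w‖⁻¹ ^ 2 * q (w : V)) * ‖w‖ ^ 2 :=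
          mul_le_mul_of_nonneg_right hle (by positivity)
        calc lam * ‖w‖ ^ 2 ≤ (‖w‖⁻¹ ^ 2 * q (w : V)) * ‖w‖ ^ 2 := h2
          _ = q (w : V) := by
              rw [show (‖w‖⁻¹ ^ 2 * q (w : V)) * ‖w‖ ^ 2
                    = q (w : V) * (‖w‖⁻¹ * ‖w‖) ^ 2 by ring,
                inv_mul_cancel₀ (ne_of_gt hcpos)]
              ring
    refine ⟨lam / (n + 1), by positivity, fun z x => ?_⟩
    set y : V := Sum.elim z x with hy
    have hymem : y ∈ K ⊔ W := by rw [hKW.sup_eq_top]; trivial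
    obtain ⟨u, huK, w, hwW, huw⟩ := Submodule.mem_sup.mp hymem
    have hMu : M.mulVec u = 0 := by exact huK
    have hqy : q y = q w := by rw [← huw]; exact hcross u w hMu
    have hxw : ∀ i, x i = w (Sum.inr i) := by
      intro i
      have : y (Sum.inr i) = u (Sum.inr i) + w (Sum.inr i) := by rw [← huw]; rfl
      rw [hker_x u hMu i, zero_add] at this
      simpa [hy] using this
    have hsum : (∑ i, x i ^ 2) ≤ n * ‖w‖ ^ 2 := by
      calc (∑ i, x i ^ 2) ≤ ∑ _i : Fin n, ‖w‖ ^ 2 := by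
            apply Finset.sum_le_sum
            intro i _
            rw [hxw i]
            have h1 : |w (Sum.inr i)| ≤ ‖w‖ := by
              simpa [Real.norm_eq_abs] using norm_le_pi_norm w (Sum.inr i)
            calc w (Sum.inr i) ^ 2 = |w (Sum.inr i)| ^ 2 := (sq_abs _).symm
              _ ≤ ‖w‖ ^ 2 := by
                  apply pow_le_pow_left₀ (abs_nonneg _) h1
        _ = n * ‖w‖ ^ 2 := by simp [mul_comm]
    have hWb := hWbound ⟨w, hwW⟩
    have hnorm : ‖(⟨w, hwW⟩ : ↥W)‖ = ‖w‖ := rfl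
    rw [hnorm] at hWb
    have hstep : lam / (n + 1) * (n * ‖w‖ ^ 2) ≤ lam * ‖w‖ ^ 2 := by
      rw [div_mul_eq_mul_div, div_le_iff₀ (by positivity)]
      have : (n : ℝ) ≤ n + 1 := by linarith
      calc lam * (n * ‖w‖ ^ 2) = lam * ‖w‖ ^ 2 * n := by ring
        _ ≤ lam * ‖w‖ ^ 2 * (n + 1) := by
            apply mul_le_mul_of_nonneg_left this (by positivity)
    calc lam / (n + 1) * (∑ i, x i ^ 2)
        ≤ lam / (n + 1) * (n * ‖w‖ ^ 2) := by
          apply mul_le_mul_of_nonneg_left hsum (by positivity)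
      _ ≤ lam * ‖w‖ ^ 2 := hstep
      _ ≤ q w := hWb
      _ = q y := hqy.symm

theorem partial_posdef_iff_classK {p n : ℕ}
    (M : Matrix (Fin p ⊕ Fin n) (Fin p ⊕ Fin n) ℝ) (hM : M.IsSymm) :
    (M.PosSemidef ∧ ∀ (z : Fin p → ℝ) (x : Fin n → ℝ), x ≠ 0 →
        0 < Sum.elim z x ⬝ᵥ M.mulVec (Sum.elim z x)) ↔
      ∃ κ : ℝ → ℝ, IsClassK κ ∧ ∀ (z : Fin p → ℝ) (x : Fin n → ℝ),
        κ (Real.sqrt (∑ i, x i ^ 2)) ≤ Sum.elim z x ⬝ᵥ M.mulVec (Sum.elim z x) := by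
  constructor
  · rintro ⟨hpsd, hpos⟩
    obtain ⟨μ, hμ, hb⟩ := key_bound M hM hpsd hpos
    refine ⟨fun r => μ * r ^ 2, ⟨?_, ?_, by simp, ?_⟩, ?_⟩
    · exact (continuous_const.mul (continuous_pow 2)).continuousOn
    · intro a ha b hb hab
      exact mul_lt_mul_of_pos_left (pow_lt_pow_left₀ hab ha two_ne_zero) hμ
    · intro r _
      positivity
    · intro z x
      have hnn : (0 : ℝ) ≤ ∑ i, x i ^ 2 := Finset.sum_nonneg fun i _ => sq_nonneg _
      show μ * Real.sqrt (∑ i, x i ^ 2) ^ 2 ≤ _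
      rw [Real.sq_sqrt hnn]
      exact hb z x
  · rintro ⟨κ, ⟨hcont, hsm, h0, hnn⟩, hb⟩
    have hHerm : M.IsHermitian := by
      rw [Matrix.IsHermitian, conjTranspose_eq_transpose_of_trivial]
      exact hM
    have hpsd : M.PosSemidef := by
      refine Matrix.PosSemidef.of_dotProduct_mulVec_nonneg hHerm (fun y => ?_)
      have helim : Sum.elim (fun j => y (Sum.inl j)) (fun i => y (Sum.inr i)) = y := by
        funext w; cases w <;> rfl
      have h1 := hb (fun j => y (Sum.inl j)) (fun i => y (Sum.inr i))
      rw [helim] at h1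
      have h2 : 0 ≤ κ (Real.sqrt (∑ i, y (Sum.inr i) ^ 2)) :=
        hnn _ (Real.sqrt_nonneg _)
      simpa using le_trans h2 h1
    refine ⟨hpsd, fun z x hx => ?_⟩
    have hex : ∃ i, x i ≠ 0 := Function.ne_iff.mp hx
    have hsumpos : 0 < ∑ i, x i ^ 2 := by
      obtain ⟨i, hi⟩ := hex
      exact Finset.sum_pos' (fun j _ => sq_nonneg _)
        ⟨i, Finset.mem_univ i, by positivity⟩
    have hsqrt : 0 < Real.sqrt (∑ i, x i ^ 2) := Real.sqrt_pos.mpr hsumpos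
    have hlt : κ 0 < κ (Real.sqrt (∑ i, x i ^ 2)) :=
      hsm (le_refl (0:ℝ)) (Real.sqrt_nonneg _) hsqrt
    rw [h0] at hlt
    exact lt_of_lt_of_le hlt (hb z x)
end

section
/- Let P and Q be symmetric real matrices with P A + Aᵀ P = −Q, where Q is partially positive definite w.r.t. the last n components (Q ⪰ 0 and yᵀ Q y > 0 whenever the last n components of y are nonzero). If P is positive semidefinite, then P is also partially positive definite w.r.t. the last n components. -/
open Matrix

theorem lyapunov_solution_partial_posdef {p n : ℕ}
    (A P Q : Matrix (Fin p ⊕ Fin n) (Fin p ⊕ Fin n) ℝ)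
    (hPsymm : P.IsSymm) (hQsymm : Q.IsSymm)
    (hLyap : P * A + Aᵀ * P = -Q)
    (hQpsd : Q.PosSemidef)
    (hQpd : ∀ (z : Fin p → ℝ) (x : Fin n → ℝ), x ≠ 0 →
      0 < Sum.elim z x ⬝ᵥ Q.mulVec (Sum.elim z x))
    (hPpsd : P.PosSemidef) :
    ∀ (z : Fin p → ℝ) (x : Fin n → ℝ), x ≠ 0 →
      0 < Sum.elim z x ⬝ᵥ P.mulVec (Sum.elim z x) := by
  intro z x hx
  set y := Sum.elim z x with hy
  have hnn : 0 ≤ y ⬝ᵥ P.mulVec y := by simpa using hPpsd.dotProduct_mulVec_nonneg y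
  rcases lt_or_eq_of_le hnn with h | h
  · exact h
  · exfalso
    have hPy : P.mulVec y = 0 := by
      have := (hPpsd.dotProduct_mulVec_zero_iff y).mp
      simp only [star_trivial] at this
      exact this h.symm
    have hQy : 0 < y ⬝ᵥ Q.mulVec y := hQpd z x hx
    have hQ0 : y ⬝ᵥ Q.mulVec y = 0 := by
      have h1 : y ⬝ᵥ (P * A + Aᵀ * P).mulVec y = y ⬝ᵥ (-Q).mulVec y := by rw [hLyap]
      have h2 : y ⬝ᵥ (P * A).mulVec y = 0 := by
        have hv : y ᵥ* P = 0 := by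
          rw [← mulVec_transpose, hPsymm, hPy]
        rw [dotProduct_mulVec, ← vecMul_vecMul, hv, zero_vecMul, zero_dotProduct]
      have h3 : y ⬝ᵥ (Aᵀ * P).mulVec y = 0 := by
        rw [← mulVec_mulVec, hPy, mulVec_zero, dotProduct_zero]
      rw [add_mulVec, dotProduct_add, h2, h3, neg_mulVec, dotProduct_neg] at h1
      linarith
    linarith
end
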